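/- Suppose f : ℝ → ℝ is additive, f restricted to some perfect set P ⊆ ℝ is continuous, and for every nowhere dense set M ⊆ ℝ the image f[M] is a proper subset of ℝ. Then there exists a closed set F ⊆ ℝ² whose projection onto the x-axis is all of ℝ and which is disjoint from the graph of f. (In particular f is not almost continuous.) -/

import Mathlib

open Set Metric

set_option maxHeartbeats 1000000

noncomputable section AddAC

structure SplitData (C : Set ℝ) (ε : ℝ) where
  C0 : Set ℝ
  C1 : Set ℝ
  u : ℝ
  v : ℝ
  perf0 : Perfect C0
  ne0 : C0.Nonempty
  sub0 : C0 ⊆ C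
  perf1 : Perfect C1
  ne1 : C1.Nonempty
  sub1 : C1 ⊆ C
  lb0 : ∀ q ∈ C0, u ≤ q
  ub0 : ∀ q ∈ C0, q ≤ u + ε
  lb1 : ∀ p ∈ C1, v - ε ≤ p
  ub1 : ∀ p ∈ C1, p ≤ v
  vu : v < u

lemma exists_splitData {C : Set ℝ} (hC : Perfect C) (hne : C.Nonempty) {ε : ℝ} (hε : 0 < ε) :
    Nonempty (SplitData C ε) := by
  obtain ⟨x, hx⟩ := hne
  have hacc : AccPt x (Filter.principal C) := hC.acc x hx
  rw [accPt_iff_nhds] at hacc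
  obtain ⟨y, ⟨-, hyC⟩, hyx⟩ := hacc univ Filter.univ_mem
  set x' := min x y with hx'
  set y' := max x y with hy'
  have hx'C : x' ∈ C := by rcases min_cases x y with ⟨h, -⟩ | ⟨h, -⟩ <;> rw [hx', h] <;> assumption
  have hy'C : y' ∈ C := by rcases max_cases x y with ⟨h, -⟩ | ⟨h, -⟩ <;> rw [hy', h] <;> assumption
  have hlt : x' < y' := min_lt_max.mpr (Ne.symm hyx)
  set δ : ℝ := min (ε / 2) ((y' - x') / 3) with hδdef
  have hδ : 0 < δ := lt_min (by linarith) (by linarith)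
  have hδε : 2 * δ ≤ ε := by
    have := min_le_left (ε / 2) ((y' - x') / 3); linarith [hδdef ▸ this]
  have hδ3 : 3 * δ ≤ y' - x' := by
    have := min_le_right (ε / 2) ((y' - x') / 3); linarith [hδdef ▸ this]
  obtain ⟨hperf1, hne1⟩ := hC.closure_nhds_inter x' hx'C (mem_ball_self hδ) isOpen_ball
  obtain ⟨hperf0, hne0⟩ := hC.closure_nhds_inter y' hy'C (mem_ball_self hδ) isOpen_ball
  have hCclosed : closure C = C := hC.closed.closure_eq
  have hsub1 : closure (ball x' δ ∩ C) ⊆ C := by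
    calc closure (ball x' δ ∩ C) ⊆ closure C := closure_mono inter_subset_right
    _ = C := hCclosed
  have hsub0 : closure (ball y' δ ∩ C) ⊆ C := by
    calc closure (ball y' δ ∩ C) ⊆ closure C := closure_mono inter_subset_right
    _ = C := hCclosed
  have hball1 : closure (ball x' δ ∩ C) ⊆ closedBall x' δ := by
    calc closure (ball x' δ ∩ C) ⊆ closure (ball x' δ) := closure_mono inter_subset_left
    _ ⊆ closedBall x' δ := closure_ball_subset_closedBall
  have hball0 : closure (ball y' δ ∩ C) ⊆ closedBall y' δ := by
    calc closure (ball y' δ ∩ C) ⊆ closure (ball y' δ) := closure_mono inter_subset_left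
    _ ⊆ closedBall y' δ := closure_ball_subset_closedBall
  refine ⟨⟨closure (ball y' δ ∩ C), closure (ball x' δ ∩ C), y' - δ, x' + δ,
    hperf0, hne0, hsub0, hperf1, hne1, hsub1, ?_, ?_, ?_, ?_, ?_⟩⟩
  · intro q hq
    have := hball0 hq
    rw [mem_closedBall, Real.dist_eq, abs_le] at this
    linarith [this.1]
  · intro q hq
    have := hball0 hq
    rw [mem_closedBall, Real.dist_eq, abs_le] at this
    linarith [this.2]
  · intro p hp
    have := hball1 hp
    rw [mem_closedBall, Real.dist_eq, abs_le] at this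
    linarith [this.1]
  · intro p hp
    have := hball1 hp
    rw [mem_closedBall, Real.dist_eq, abs_le] at this
    linarith [this.2]
  · linarith

structure PNode where
  C : Set ℝ
  perf : Perfect C
  ne : C.Nonempty
  cpt : IsCompact C
  bddDiam : ∀ p ∈ C, ∀ q ∈ C, |p - q| ≤ 2

def splitD (N : PNode) (ε : ℝ) (hε : 0 < ε) : SplitData N.C ε :=
  (exists_splitData N.perf N.ne hε).some

lemma half_pow_pos (n : ℕ) : (0:ℝ) < (1/2)^n := by positivity

lemma half_pow_le_one (n : ℕ) : ((1:ℝ)/2)^n ≤ 1 :=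
  pow_le_one₀ (by norm_num) (by norm_num)

def ndChild (N : PNode) (n : ℕ) (b : Bool) : PNode :=
  let S := splitD N ((1/2)^(n+1)) (half_pow_pos (n+1))
  if b then
    ⟨S.C1, S.perf1, S.ne1, N.cpt.of_isClosed_subset S.perf1.closed S.sub1,
      fun p hp q hq => by
        have h1 := S.lb1 p hp; have h2 := S.ub1 p hp
        have h3 := S.lb1 q hq; have h4 := S.ub1 q hq
        have := half_pow_le_one (n+1)
        rw [abs_le]; constructor <;> linarith⟩
  else
    ⟨S.C0, S.perf0, S.ne0, N.cpt.of_isClosed_subset S.perf0.closed S.sub0,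
      fun p hp q hq => by
        have h1 := S.lb0 p hp; have h2 := S.ub0 p hp
        have h3 := S.lb0 q hq; have h4 := S.ub0 q hq
        have := half_pow_le_one (n+1)
        rw [abs_le]; constructor <;> linarith⟩

def nd (R : PNode) : List Bool → PNode
  | [] => R
  | b :: l => ndChild (nd R l) l.length b

lemma nd_sub (R : PNode) (b : Bool) (l : List Bool) :
    (nd R (b :: l)).C ⊆ (nd R l).C := by
  cases b
  · exact (splitD (nd R l) ((1/2)^(l.length+1)) (half_pow_pos (l.length+1))).sub0
  · exact (splitD (nd R l) ((1/2)^(l.length+1)) (half_pow_pos (l.length+1))).sub1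

lemma nd_sub_root (R : PNode) (l : List Bool) : (nd R l).C ⊆ R.C := by
  induction l with
  | nil => exact subset_rfl
  | cons b l ih => exact (nd_sub R b l).trans ih

lemma nd_cons_diam (R : PNode) (b : Bool) (l : List Bool) :
    ∀ p ∈ (nd R (b :: l)).C, ∀ q ∈ (nd R (b :: l)).C, |p - q| ≤ (1/2)^(l.length+1) := by
  cases b
  · intro p hp q hq
    have h1 := (splitD (nd R l) ((1/2)^(l.length+1)) (half_pow_pos (l.length+1))).lb0 p hp
    have h2 := (splitD (nd R l) ((1/2)^(l.length+1)) (half_pow_pos (l.length+1))).ub0 p hp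
    have h3 := (splitD (nd R l) ((1/2)^(l.length+1)) (half_pow_pos (l.length+1))).lb0 q hq
    have h4 := (splitD (nd R l) ((1/2)^(l.length+1)) (half_pow_pos (l.length+1))).ub0 q hq
    rw [abs_le]; constructor <;> linarith
  · intro p hp q hq
    have h1 := (splitD (nd R l) ((1/2)^(l.length+1)) (half_pow_pos (l.length+1))).lb1 p hp
    have h2 := (splitD (nd R l) ((1/2)^(l.length+1)) (half_pow_pos (l.length+1))).ub1 p hp
    have h3 := (splitD (nd R l) ((1/2)^(l.length+1)) (half_pow_pos (l.length+1))).lb1 q hq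
    have h4 := (splitD (nd R l) ((1/2)^(l.length+1)) (half_pow_pos (l.length+1))).ub1 q hq
    rw [abs_le]; constructor <;> linarith

lemma nd_diam (R : PNode) (l : List Bool) :
    ∀ p ∈ (nd R l).C, ∀ q ∈ (nd R l).C, |p - q| ≤ 2 * (1/2)^l.length := by
  cases l with
  | nil => simpa [nd] using R.bddDiam
  | cons b l =>
    intro p hp q hq
    have h := nd_cons_diam R b l p hp q hq
    have h2 : ((1:ℝ)/2)^(l.length+1) ≤ 2 * (1/2)^(b::l).length := by
      show ((1:ℝ)/2)^(l.length+1) ≤ 2 * (1/2)^(l.length+1)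
      nlinarith [half_pow_pos (l.length+1)]
    linarith

def pre (x : ℕ → Bool) : ℕ → List Bool
  | 0 => []
  | n + 1 => x n :: pre x n

@[simp] lemma pre_length (x : ℕ → Bool) (n : ℕ) : (pre x n).length = n := by
  induction n with
  | zero => rfl
  | succ n ih => simp [pre, ih]

lemma pre_eq_of_agree {x y : ℕ → Bool} {n : ℕ} (h : ∀ m < n, x m = y m) :
    pre x n = pre y n := by
  induction n with
  | zero => rfl
  | succ n ih =>
    simp only [pre]
    rw [h n (Nat.lt_succ_self n), ih (fun m hm => h m (hm.trans (Nat.lt_succ_self n)))]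

lemma nd_pre_antitone (R : PNode) (x : ℕ → Bool) (n : ℕ) :
    (nd R (pre x (n+1))).C ⊆ (nd R (pre x n)).C := nd_sub R (x n) (pre x n)

lemma iInter_nd_nonempty (R : PNode) (x : ℕ → Bool) :
    (⋂ n, (nd R (pre x n)).C).Nonempty := by
  apply IsCompact.nonempty_iInter_of_sequence_nonempty_isCompact_isClosed
  · exact nd_pre_antitone R x
  · exact fun n => (nd R (pre x n)).ne
  · exact (nd R (pre x 0)).cpt
  · exact fun n => (nd R (pre x n)).perf.closed

def aSel (R : PNode) (x : ℕ → Bool) : ℝ := (iInter_nd_nonempty R x).some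

lemma aSel_mem (R : PNode) (x : ℕ → Bool) (n : ℕ) :
    aSel R x ∈ (nd R (pre x n)).C := by
  have := (iInter_nd_nonempty R x).some_mem
  rw [mem_iInter] at this
  exact this n

/-- integer scaled floor -/
def kk (t : ℝ) (n : ℕ) : ℤ := ⌊t * 2^n⌋

def dg (t : ℝ) (n : ℕ) : Bool := decide (kk t (n+1) % 2 = 1)

lemma kk_succ (t : ℝ) (n : ℕ) :
    kk t (n+1) = 2 * kk t n + (if dg t n then 1 else 0) := by
  have h1 : (kk t n : ℝ) ≤ t * 2^n := Int.floor_le _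
  have h2 : t * 2^n < kk t n + 1 := Int.lt_floor_add_one _
  have e : t * 2^(n+1) = (t * 2^n) * 2 := by ring
  have h3 : (2 * kk t n : ℤ) ≤ kk t (n+1) := by
    show (2 * kk t n : ℤ) ≤ ⌊t * 2^(n+1)⌋
    rw [e]
    refine Int.le_floor.mpr ?_
    push_cast
    nlinarith
  have h4 : kk t (n+1) < 2 * kk t n + 2 := by
    show (⌊t * 2^(n+1)⌋ : ℤ) < 2 * kk t n + 2
    rw [e]
    have h5 : (⌊t * 2^n * 2⌋ : ℝ) < 2 * (kk t n : ℝ) + 2 := by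
      calc (⌊t * 2^n * 2⌋ : ℝ) ≤ t * 2^n * 2 := Int.floor_le _
      _ < 2 * (kk t n : ℝ) + 2 := by nlinarith
    exact_mod_cast h5
  have hdg : dg t n = true ↔ kk t (n+1) % 2 = 1 := by simp [dg]
  rcases Bool.eq_false_or_eq_true (dg t n) with hb | hb <;> rw [hb]
  · have := hdg.mp hb
    simp only [if_true]
    omega
  · simp only [if_neg Bool.false_ne_true]
    have hne : ¬ (kk t (n+1) % 2 = 1) := fun h => by
      have := hdg.mpr h; rw [hb] at this; exact Bool.false_ne_true this
    omega

lemma kk_mono (t t' : ℝ) (n : ℕ) (h : t ≤ t') : kk t n ≤ kk t' n :=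
  Int.floor_le_floor (by nlinarith [pow_pos (by norm_num : (0:ℝ) < 2) n])

lemma kk_down (t t' : ℝ) (n : ℕ) (h : kk t (n+1) = kk t' (n+1)) : kk t n = kk t' n := by
  have h1 := kk_succ t n
  have h2 := kk_succ t' n
  rcases Bool.eq_false_or_eq_true (dg t n) with hb | hb <;>
    rcases Bool.eq_false_or_eq_true (dg t' n) with hb' | hb' <;>
      rw [hb] at h1 <;> rw [hb'] at h2 <;> simp at h1 h2 <;> omega

lemma dg_eq_of_kk (t t' : ℝ) (n : ℕ) (h : kk t (n+1) = kk t' (n+1)) : dg t n = dg t' n := by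
  simp only [dg, h]

lemma pre_eq_of_kk {t t' : ℝ} {n : ℕ} (h : kk t n = kk t' n) :
    pre (dg t) n = pre (dg t') n := by
  induction n with
  | zero => rfl
  | succ n ih =>
    simp only [pre]
    rw [dg_eq_of_kk t t' n h, ih (kk_down t t' n h)]

lemma kk_zero_of_Ico {t : ℝ} (ht : t ∈ Ico (0:ℝ) 1) : kk t 0 = 0 := by
  show ⌊t * 2^0⌋ = 0
  rw [pow_zero, mul_one]
  exact Int.floor_eq_zero_iff.mpr (by exact ⟨ht.1, ht.2⟩)

lemma kk_eq_of_dg_agree {t t' : ℝ} (ht : t ∈ Ico (0:ℝ) 1) (ht' : t' ∈ Ico (0:ℝ) 1)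
    {n : ℕ} (h : ∀ m < n, dg t m = dg t' m) : kk t n = kk t' n := by
  induction n with
  | zero => rw [kk_zero_of_Ico ht, kk_zero_of_Ico ht']
  | succ n ih =>
    rw [kk_succ, kk_succ, h n (Nat.lt_succ_self n),
      ih (fun m hm => h m (hm.trans (Nat.lt_succ_self n)))]

def aa (R : PNode) (t : ℝ) : ℝ := aSel R (dg t)

def ph (R : PNode) (t : ℝ) : ℝ := t - aa R t

lemma aa_mem (R : PNode) (t : ℝ) (n : ℕ) : aa R t ∈ (nd R (pre (dg t) n)).C :=
  aSel_mem R (dg t) n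

lemma aa_mem_root (R : PNode) (t : ℝ) : aa R t ∈ R.C := aa_mem R t 0

lemma sibling_lt (R : PNode) (l : List Bool) {p q : ℝ}
    (hp : p ∈ (nd R (false :: l)).C) (hq : q ∈ (nd R (true :: l)).C) : q < p := by
  have h1 := (splitD (nd R l) ((1/2)^(l.length+1)) (half_pow_pos (l.length+1))).lb0 p hp
  have h2 := (splitD (nd R l) ((1/2)^(l.length+1)) (half_pow_pos (l.length+1))).ub1 q hq
  have h3 := (splitD (nd R l) ((1/2)^(l.length+1)) (half_pow_pos (l.length+1))).vu
  linarith

lemma aa_antitone (R : PNode) {t t' : ℝ} (ht : t ∈ Ico (0:ℝ) 1) (ht' : t' ∈ Ico (0:ℝ) 1)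
    (h : t ≤ t') : aa R t' ≤ aa R t := by
  by_cases hdg : dg t = dg t'
  · unfold aa
    rw [hdg]
  · have hex : ∃ n, dg t n ≠ dg t' n := by
      by_contra hc
      push_neg at hc
      exact hdg (funext hc)
    set n := Nat.find hex with hndef
    have hn : dg t n ≠ dg t' n := Nat.find_spec hex
    have hm : ∀ m < n, dg t m = dg t' m := fun m hm => by
      by_contra hc
      exact Nat.find_min hex hm hc
    have hkkn : kk t n = kk t' n := kk_eq_of_dg_agree ht ht' hm
    have hmono : kk t (n+1) ≤ kk t' (n+1) := kk_mono t t' (n+1) h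
    have h1 := kk_succ t n
    have h2 := kk_succ t' n
    have hdgt : dg t n = false ∧ dg t' n = true := by
      rcases Bool.eq_false_or_eq_true (dg t n) with hb | hb <;>
        rcases Bool.eq_false_or_eq_true (dg t' n) with hb' | hb'
      · exact absurd (hb.trans hb'.symm) hn
      · rw [hb] at h1; rw [hb'] at h2
        simp only [if_true, if_neg Bool.false_ne_true] at h1 h2
        omega
      · exact ⟨hb, hb'⟩
      · exact absurd (hb.trans hb'.symm) hn
    have hpre : pre (dg t) n = pre (dg t') n := pre_eq_of_agree hm
    have hmem1 : aa R t ∈ (nd R (false :: pre (dg t) n)).C := by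
      have := aa_mem R t (n+1)
      rwa [show pre (dg t) (n+1) = dg t n :: pre (dg t) n from rfl, hdgt.1] at this
    have hmem2 : aa R t' ∈ (nd R (true :: pre (dg t) n)).C := by
      have := aa_mem R t' (n+1)
      rwa [show pre (dg t') (n+1) = dg t' n :: pre (dg t') n from rfl, hdgt.2, ← hpre] at this
    exact le_of_lt (sibling_lt R (pre (dg t) n) hmem1 hmem2)

lemma ph_mono (R : PNode) {t t' : ℝ} (ht : t ∈ Ico (0:ℝ) 1) (ht' : t' ∈ Ico (0:ℝ) 1)
    (h : t ≤ t') : ph R t ≤ ph R t' := by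
  have := aa_antitone R ht ht' h
  unfold ph
  linarith

lemma kk_eq_iff (t : ℝ) (n : ℕ) (K : ℤ) :
    kk t n = K ↔ (K:ℝ)/2^n ≤ t ∧ t < ((K:ℝ)+1)/2^n := by
  have hp : (0:ℝ) < 2^n := by positivity
  rw [kk, Int.floor_eq_iff, div_le_iff₀ hp, lt_div_iff₀ hp]

lemma hole (R : PNode) {t₀ : ℝ} (ht₀ : t₀ ∈ Ico (0:ℝ) 1) (n : ℕ) :
    ∃ g1 g2 : ℝ, g1 < g2 ∧ (∀ t ∈ Ico (0:ℝ) 1, ph R t ∉ Ioo g1 g2) ∧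
      |g1 - ph R t₀| ≤ 10 * (1/2)^n ∧ |g2 - ph R t₀| ≤ 10 * (1/2)^n := by
  have hp : (0:ℝ) < 2^n := by positivity
  have hp1 : (0:ℝ) < 2^(n+1) := by positivity
  set K : ℤ := kk t₀ n with hKdef
  set l : List Bool := pre (dg t₀) n with hldef
  have hlen : l.length = n := pre_length _ _
  set S := splitD (nd R l) ((1/2)^(l.length+1)) (half_pow_pos (l.length+1)) with hSdef
  set m : ℝ := ((2*K+1 : ℤ) : ℝ) / 2^(n+1) with hmdef
  -- basic facts about K
  have ht₀K : (K:ℝ)/2^n ≤ t₀ ∧ t₀ < ((K:ℝ)+1)/2^n := (kk_eq_iff t₀ n K).mp rfl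
  have hK0 : 0 ≤ K := by
    have : (0:ℝ) ≤ t₀ * 2^n := mul_nonneg ht₀.1 (le_of_lt hp)
    exact Int.le_floor.mpr (by simpa using this)
  have hK1 : (K:ℝ) + 1 ≤ 2^n := by
    have h2 : t₀ * 2^n < 2^n := by nlinarith [ht₀.2]
    have h3 : (K:ℝ) ≤ t₀ * 2^n := Int.floor_le _
    have h4 : K < (2:ℤ)^n := by
      have : (K:ℝ) < 2^n := lt_of_le_of_lt h3 h2
      exact_mod_cast this
    have : K + 1 ≤ (2:ℤ)^n := h4
    exact_mod_cast this
  have hm01 : m ∈ Ico (0:ℝ) 1 := by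
    constructor
    · apply div_nonneg _ (le_of_lt hp1)
      have : (0:ℝ) ≤ (K:ℝ) := by exact_mod_cast hK0
      push_cast
      linarith
    · rw [hmdef, div_lt_one hp1]
      push_cast
      rw [pow_succ]
      push_cast at hK1
      linarith
  have hkm1 : kk m (n+1) = 2*K+1 := by
    rw [kk_eq_iff]
    refine ⟨hmdef.ge, ?_⟩
    rw [hmdef, div_lt_div_iff₀ hp1 hp1]
    nlinarith
  have hkmK : kk m n = K := by
    have h1 := kk_succ m n
    rw [hkm1] at h1
    rcases Bool.eq_false_or_eq_true (dg m n) with hb | hb <;> rw [hb] at h1 <;>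
      simp only [if_true, if_neg Bool.false_ne_true] at h1 <;> omega
  have hdgm : dg m n = true := by
    have h1 := kk_succ m n
    rw [hkm1] at h1
    rcases Bool.eq_false_or_eq_true (dg m n) with hb | hb
    · exact hb
    · rw [hb] at h1
      simp only [if_neg Bool.false_ne_true] at h1
      omega
  -- bounds relating t₀ and m
  have hmtK : (K:ℝ)/2^n ≤ m ∧ m < ((K:ℝ)+1)/2^n := (kk_eq_iff m n K).mp hkmK
  have htm : |t₀ - m| ≤ (1/2)^n := by
    have hw : ((K:ℝ)+1)/2^n - (K:ℝ)/2^n = (1/2)^n := by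
      rw [div_sub_div_same]
      rw [one_div, inv_pow]
      field_simp
      ring
    rw [abs_le]
    constructor <;> nlinarith [ht₀K.1, ht₀K.2, hmtK.1, hmtK.2]
  -- membership lemmas
  have key_false : ∀ t ∈ Ico (0:ℝ) 1, kk t n = K → t < m → S.u ≤ aa R t := by
    intro t ht hkt htm'
    have htt : (K:ℝ)/2^n ≤ t := ((kk_eq_iff t n K).mp hkt).1
    have hkt1 : kk t (n+1) = 2*K := by
      rw [kk_eq_iff]
      constructor
      · push_cast
        rw [div_le_iff₀ hp1, pow_succ]
        rw [div_le_iff₀ hp] at htt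
        push_cast at htt ⊢
        nlinarith
      · push_cast
        rw [lt_div_iff₀ hp1]
        have : t < m := htm'
        rw [hmdef] at this
        rw [lt_div_iff₀ hp1] at this
        push_cast at this
        linarith
    have hdgt : dg t n = false := by
      have h1 := kk_succ t n
      rw [hkt1] at h1
      have hktK : kk t n = K := hkt
      rcases Bool.eq_false_or_eq_true (dg t n) with hb | hb
      · rw [hb] at h1
        simp only [if_true] at h1
        omega
      · exact hb
    have hpre : pre (dg t) n = l := pre_eq_of_kk (hkt.trans hKdef.symm ▸ hkt)
    have hmem : aa R t ∈ S.C0 := by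
      have h := aa_mem R t (n+1)
      rw [show pre (dg t) (n+1) = dg t n :: pre (dg t) n from rfl, hdgt, hpre] at h
      exact h
    exact S.lb0 _ hmem
  have key_true : ∀ t ∈ Ico (0:ℝ) 1, kk t (n+1) = 2*K+1 → aa R t ≤ S.v := by
    intro t ht hkt1
    have hktK : kk t n = K := by
      have h1 := kk_succ t n
      rw [hkt1] at h1
      rcases Bool.eq_false_or_eq_true (dg t n) with hb | hb <;> rw [hb] at h1 <;>
        simp only [if_true, if_neg Bool.false_ne_true] at h1 <;> omega
    have hdgt : dg t n = true := by
      have h1 := kk_succ t n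
      rw [hkt1] at h1
      rcases Bool.eq_false_or_eq_true (dg t n) with hb | hb
      · exact hb
      · rw [hb] at h1
        simp only [if_neg Bool.false_ne_true] at h1
        omega
    have hpre : pre (dg t) n = l := pre_eq_of_kk hktK
    have hmem : aa R t ∈ S.C1 := by
      have h := aa_mem R t (n+1)
      rw [show pre (dg t) (n+1) = dg t n :: pre (dg t) n from rfl, hdgt, hpre] at h
      exact h
    exact S.ub1 _ hmem
  refine ⟨m - S.u, m - S.v, by linarith [S.vu], ?_, ?_, ?_⟩
  · -- avoidance
    intro t ht hIoo
    obtain ⟨hIoo1, hIoo2⟩ := hIoo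
    rcases lt_or_ge t m with hcase | hcase
    · -- show ph R t ≤ m - S.u
      have hub : ph R t ≤ m - S.u := by
        rcases le_or_gt ((K:ℝ)/2^n) t with hc2 | hc2
        · have hkt : kk t n = K := by
            rw [kk_eq_iff]
            exact ⟨hc2, lt_of_lt_of_le hcase (le_of_lt hmtK.2)⟩
          have := key_false t ht hkt hcase
          unfold ph
          linarith
        · set tK : ℝ := (K:ℝ)/2^n with htKdef
          have htK01 : tK ∈ Ico (0:ℝ) 1 := by
            constructor
            · apply div_nonneg _ (le_of_lt hp)
              exact_mod_cast hK0
            · rw [htKdef, div_lt_one hp]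
              push_cast at hK1 ⊢
              linarith
          have hkt : kk tK n = K := by
            rw [kk_eq_iff]
            refine ⟨le_refl _, ?_⟩
            rw [div_lt_div_iff₀ hp hp]
            nlinarith
          have htKm : tK < m := by
            rw [htKdef, hmdef, div_lt_div_iff₀ hp hp1, pow_succ]
            push_cast
            nlinarith
          have h1 := key_false tK htK01 hkt htKm
          have h2 := ph_mono R ht htK01 (le_of_lt hc2)
          unfold ph at h2 ⊢
          linarith
      linarith
    · -- m ≤ t : show ph R t ≥ m - S.v
      have hlb : m - S.v ≤ ph R t := by
        rcases lt_or_ge t (((K:ℝ)+1)/2^n) with hc2 | hc2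
        · have hkt1 : kk t (n+1) = 2*K+1 := by
            rw [kk_eq_iff]
            constructor
            · push_cast
              rw [div_le_iff₀ hp1]
              rw [hmdef, div_le_iff₀ hp1] at hcase
              push_cast at hcase
              linarith
            · push_cast
              rw [lt_div_iff₀ hp1, pow_succ]
              rw [lt_div_iff₀ hp] at hc2
              push_cast at hc2
              nlinarith
          have := key_true t ht hkt1
          unfold ph
          linarith
        · have h1 := key_true m hm01 hkm1
          have h2 := ph_mono R hm01 ht hcase
          unfold ph at h2 ⊢
          linarith
      linarith
  · -- |g1 - ph t₀| small
    obtain ⟨q0, hq0⟩ := S.ne0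
    have hq0C : q0 ∈ (nd R l).C := S.sub0 hq0
    have haaC : aa R t₀ ∈ (nd R l).C := aa_mem R t₀ n
    have hd1 := nd_diam R l q0 hq0C (aa R t₀) haaC
    have hd2 : |S.u - q0| ≤ (1/2)^(l.length+1) := by
      have h1 := S.lb0 q0 hq0
      have h2 := S.ub0 q0 hq0
      rw [abs_le]; constructor <;> linarith
    rw [hlen] at hd1
    have hd2' : |S.u - q0| ≤ ((1:ℝ)/2)^(n+1) := by rw [← hlen]; exact hd2
    clear hd2
    have hd2 := hd2'
    have hhalf : ((1:ℝ)/2)^(n+1) ≤ (1/2)^n := by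
      rw [pow_succ]
      nlinarith [half_pow_pos n]
    have hgoal : |(m - S.u) - (t₀ - aa R t₀)| ≤ 10 * (1/2)^n := by
      rw [abs_le] at htm hd1 hd2 ⊢
      obtain ⟨a1, a2⟩ := htm
      obtain ⟨b1, b2⟩ := hd1
      obtain ⟨c1, c2⟩ := hd2
      have hpn := half_pow_pos n
      constructor <;> linarith
    exact hgoal
  · -- |g2 - ph t₀| small
    obtain ⟨p1, hp1'⟩ := S.ne1
    have hp1C : p1 ∈ (nd R l).C := S.sub1 hp1'
    have haaC : aa R t₀ ∈ (nd R l).C := aa_mem R t₀ n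
    have hd1 := nd_diam R l p1 hp1C (aa R t₀) haaC
    have hd2 : |S.v - p1| ≤ (1/2)^(l.length+1) := by
      have h1 := S.lb1 p1 hp1'
      have h2 := S.ub1 p1 hp1'
      rw [abs_le]; constructor <;> linarith
    rw [hlen] at hd1
    have hd2' : |S.v - p1| ≤ ((1:ℝ)/2)^(n+1) := by rw [← hlen]; exact hd2
    clear hd2
    have hd2 := hd2'
    have hhalf : ((1:ℝ)/2)^(n+1) ≤ (1/2)^n := by
      rw [pow_succ]
      nlinarith [half_pow_pos n]
    have hgoal : |(m - S.v) - (t₀ - aa R t₀)| ≤ 10 * (1/2)^n := by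
      rw [abs_le] at htm hd1 hd2 ⊢
      obtain ⟨a1, a2⟩ := htm
      obtain ⟨b1, b2⟩ := hd1
      obtain ⟨c1, c2⟩ := hd2
      have hpn := half_pow_pos n
      constructor <;> linarith
    exact hgoal

def BB (R : PNode) : Set ℝ := closure (ph R '' Ico (0:ℝ) 1)

lemma ph_bounds (R : PNode) {r₀ : ℝ} (hr₀ : r₀ ∈ R.C) {t : ℝ} (ht : t ∈ Ico (0:ℝ) 1) :
    ph R t ∈ Icc (-2 - r₀) (3 - r₀) := by
  have h1 := R.bddDiam (aa R t) (aa_mem_root R t) r₀ hr₀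
  rw [abs_le] at h1
  unfold ph
  constructor <;> [linarith [ht.1]; linarith [ht.2]]

lemma BB_subset (R : PNode) {r₀ : ℝ} (hr₀ : r₀ ∈ R.C) : BB R ⊆ Icc (-2 - r₀) (3 - r₀) := by
  apply closure_minimal _ isClosed_Icc
  rintro y ⟨t, ht, rfl⟩
  exact ph_bounds R hr₀ ht

lemma BB_compact (R : PNode) : IsCompact (BB R) := by
  obtain ⟨r₀, hr₀⟩ := R.ne
  exact (isCompact_Icc (a := -2 - r₀) (b := 3 - r₀)).of_isClosed_subset isClosed_closure
    (BB_subset R hr₀)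

lemma BB_interior_empty (R : PNode) : interior (BB R) = ∅ := by
  by_contra hne
  obtain ⟨z, hz⟩ := nonempty_iff_ne_empty.mpr hne
  obtain ⟨ε, hε, hball⟩ := Metric.isOpen_iff.mp isOpen_interior z hz
  have hzBB : z ∈ BB R := interior_subset hz
  obtain ⟨w, hw, hdzw⟩ := Metric.mem_closure_iff.mp hzBB (ε/2) (by linarith)
  obtain ⟨t₀, ht₀, rfl⟩ := hw
  obtain ⟨n, hn⟩ := exists_pow_lt_of_lt_one (show (0:ℝ) < ε/42 by linarith)
    (show (1:ℝ)/2 < 1 by norm_num)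
  have hn' : 21 * ((1:ℝ)/2)^n < ε/2 := by linarith
  obtain ⟨g1, g2, hg12, havoid, hg1, hg2⟩ := hole R ht₀ n
  have hIoosub : Ioo g1 g2 ⊆ ball z ε := by
    intro y hy
    rw [mem_ball, Real.dist_eq]
    rw [abs_le] at hg1 hg2
    have hdz : |ph R t₀ - z| < ε/2 := by
      rw [← Real.dist_eq]
      rw [dist_comm] at hdzw
      exact hdzw
    rw [abs_lt] at hdz ⊢
    have hpn := half_pow_pos n
    obtain ⟨hy1, hy2⟩ := hy
    constructor
    · linarith [hg1.1, hdz.1]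
    · linarith [hg2.2, hdz.2]
  set y := (g1 + g2)/2 with hydef
  have hyIoo : y ∈ Ioo g1 g2 := ⟨by linarith, by linarith⟩
  have hyBB : y ∈ BB R := interior_subset (hball (hIoosub hyIoo))
  have hr : (0:ℝ) < min (g2 - y) (y - g1) := lt_min (by linarith [hyIoo.2]) (by linarith [hyIoo.1])
  obtain ⟨w', hw', hdyw⟩ := Metric.mem_closure_iff.mp hyBB _ hr
  obtain ⟨t₁, ht₁, rfl⟩ := hw'
  apply havoid t₁ ht₁
  rw [Real.dist_eq, abs_lt] at hdyw
  constructor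
  · have := hdyw.1
    have := min_le_right (g2 - y) (y - g1)
    linarith
  · have := hdyw.2
    have := min_le_left (g2 - y) (y - g1)
    linarith

lemma BB_nwd (R : PNode) : IsNowhereDense (BB R) := by
  show interior (closure (BB R)) = ∅
  have hcl : IsClosed (BB R) := isClosed_closure
  rw [hcl.closure_eq]
  exact BB_interior_empty R

end AddAC

theorem stmt_19 (f : ℝ → ℝ) (hadd : ∀ x y : ℝ, f (x + y) = f x + f y)
    (P : Set ℝ) (hP : Perfect P) (hPne : P.Nonempty) (hcont : ContinuousOn f P)
    (himg : ∀ M : Set ℝ, IsNowhereDense M → f '' M ≠ Set.univ) :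
    ∃ F : Set (ℝ × ℝ), IsClosed F ∧ Prod.fst '' F = Set.univ ∧
      ∀ x : ℝ, (x, f x) ∉ F := by
  classical
  -- build the root node inside P
  obtain ⟨x₀, hx₀⟩ := hPne
  obtain ⟨hperf, hne⟩ := hP.closure_nhds_inter x₀ hx₀ (mem_ball_self one_pos) isOpen_ball
  set C₀ : Set ℝ := closure (ball x₀ 1 ∩ P) with hC₀def
  have hCsubP : C₀ ⊆ P := by
    have h1 : C₀ ⊆ closure P := closure_mono inter_subset_right
    rwa [hP.closed.closure_eq] at h1
  have hCsubB : C₀ ⊆ closedBall x₀ 1 :=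
    (closure_mono inter_subset_left).trans closure_ball_subset_closedBall
  have hcpt : IsCompact C₀ :=
    (isCompact_closedBall x₀ 1).of_isClosed_subset isClosed_closure hCsubB
  have hbdd : ∀ p ∈ C₀, ∀ q ∈ C₀, |p - q| ≤ 2 := by
    intro p hp q hq
    have h1 := hCsubB hp
    have h2 := hCsubB hq
    rw [mem_closedBall, Real.dist_eq, abs_le] at h1 h2
    rw [abs_le]
    constructor <;> linarith [h1.1, h1.2, h2.1, h2.2]
  set R : PNode := ⟨C₀, hperf, hne, hcpt, hbdd⟩ with hRdef
  set B : Set ℝ := BB R with hBdef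
  have hBclosed : IsClosed B := isClosed_closure
  obtain ⟨c, hc⟩ := (Set.ne_univ_iff_exists_notMem _).mp (himg B (BB_nwd R))
  -- the basic compact blocking piece
  set F₀ : Set (ℝ × ℝ) := (fun pq : ℝ × ℝ => (pq.1 + pq.2, f pq.1 + c)) '' (C₀ ×ˢ B)
    with hF₀def
  have hcontC : ContinuousOn f C₀ := hcont.mono hCsubP
  have hF₀cpt : IsCompact F₀ := by
    apply (hcpt.prod (BB_compact R)).image_of_continuousOn
    apply ContinuousOn.prodMk
    · exact (continuous_fst.add continuous_snd).continuousOn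
    · exact ((hcontC.comp continuousOn_fst (fun pq hpq => hpq.1)).add continuousOn_const)
  set piece : ℤ → Set (ℝ × ℝ) :=
    fun k => (fun pq : ℝ × ℝ => (pq.1 + (k:ℝ), pq.2 + f (k:ℝ))) '' F₀ with hpiecedef
  -- bound on first coordinates of F₀
  obtain ⟨r₀, hr₀⟩ := hne
  have hr₀B : r₀ ∈ closedBall x₀ 1 := hCsubB hr₀
  have hBsub : B ⊆ Icc (-2 - r₀) (3 - r₀) := BB_subset R hr₀
  have hfstF₀ : ∀ z ∈ F₀, -4 ≤ z.1 ∧ z.1 ≤ 5 := by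
    rintro z ⟨⟨p, q⟩, ⟨hp, hq⟩, rfl⟩
    have hpB : p ∈ closedBall x₀ 1 := hCsubB hp
    rw [mem_closedBall, Real.dist_eq, abs_le] at hpB hr₀B
    have hqB := hBsub hq
    obtain ⟨hq1, hq2⟩ := hqB
    constructor <;> simp only <;> [linarith [hpB.1, hr₀B.2]; linarith [hpB.2, hr₀B.1]]
  -- pieces are closed
  have hpiece_closed : ∀ k : ℤ, IsClosed (piece k) := by
    intro k
    apply IsCompact.isClosed
    apply hF₀cpt.image
    exact (continuous_fst.add continuous_const).prodMk (continuous_snd.add continuous_const)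
  -- local finiteness
  have hLF : LocallyFinite piece := by
    intro x
    refine ⟨(fun p : ℝ × ℝ => p.1) ⁻¹' ball x.1 1, ?_, ?_⟩
    · exact continuous_fst.continuousAt.preimage_mem_nhds (ball_mem_nhds _ one_pos)
    · apply Set.Finite.subset (Set.finite_Icc (⌈x.1 - 6⌉) (⌊x.1 + 6⌋))
      rintro k ⟨z, hz1, hz2⟩
      obtain ⟨w, hw, rfl⟩ := hz1
      obtain ⟨hw1, hw2⟩ := hfstF₀ w hw
      have hzb : |w.1 + (k:ℝ) - x.1| < 1 := by
        have := hz2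
        rwa [mem_preimage, mem_ball, Real.dist_eq] at this
      rw [abs_lt] at hzb
      constructor
      · rw [Int.ceil_le]
        linarith [hzb.1]
      · rw [Int.le_floor]
        linarith [hzb.2]
  refine ⟨⋃ k : ℤ, piece k, hLF.isClosed_iUnion hpiece_closed, ?_, ?_⟩
  · -- full projection
    apply Set.eq_univ_of_forall
    intro x
    set k : ℤ := ⌊x⌋ with hkdef
    set t : ℝ := x - k with htdef
    have ht : t ∈ Ico (0:ℝ) 1 := by
      constructor
      · rw [htdef]; linarith [Int.floor_le x]
      · rw [htdef]; linarith [Int.lt_floor_add_one x]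
    have hmem₀ : ((aa R t) + (ph R t), f (aa R t) + c) ∈ F₀ := by
      refine ⟨(aa R t, ph R t), ⟨aa_mem_root R t, ?_⟩, rfl⟩
      exact subset_closure (mem_image_of_mem _ ht)
    have hmem : ((aa R t) + (ph R t) + (k:ℝ), f (aa R t) + c + f (k:ℝ)) ∈ piece k :=
      ⟨_, hmem₀, rfl⟩
    refine ⟨_, mem_iUnion.mpr ⟨k, hmem⟩, ?_⟩
    show (aa R t) + (ph R t) + (k:ℝ) = x
    unfold t
    unfold ph
    ring
  · -- avoids the graph of f
    intro x hx
    rw [mem_iUnion] at hx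
    obtain ⟨k, z, hzF₀, hzeq⟩ := hx
    obtain ⟨⟨p, q⟩, ⟨hp, hq⟩, rfl⟩ := hzF₀
    simp only [Prod.mk.injEq] at hzeq
    obtain ⟨hx1, hx2⟩ := hzeq
    have hfx : f x = f p + f q + f (k:ℝ) := by
      rw [← hx1, hadd (p + q) (k:ℝ), hadd p q]
    have : f q = c := by linarith [hfx, hx2]
    exact hc ⟨q, hq, this⟩
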